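/- For probability measures P, Q, the identity KL(P‖M) + KL(Q‖M) = ∫ p·log(2p/(p+q)) dμ + ∫ q·log(2q/(p+q)) dμ holds, where M = ½(P+Q) and p, q are densities with respect to a dominating measure μ; consequently 2·JSD(P‖Q) equals the adversarial objective value plus 2·log 2 at the optimal discriminator. -/

import Mathlib

open MeasureTheory Real
open scoped ENNReal

/-- Jensen–Shannon divergence. -/
noncomputable def jsd {Z : Type*} [MeasurableSpace Z] (P Q : Measure Z) : ℝ :=
  (1/2) * ∫ z, Real.log (2 * (P.rnDeriv (P + Q) z).toReal) ∂P +
  (1/2) * ∫ z, Real.log (2 * (Q.rnDeriv (P + Q) z).toReal) ∂Q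

lemma aux_bound {x : ℝ≥0∞} (hx : x ≤ 1) :
    x * (‖Real.log x.toReal‖₊ : ℝ≥0∞) ≤ 1 := by
  rcases eq_or_ne x 0 with h0 | h0
  · simp [h0]
  have hxt : 0 < x.toReal := ENNReal.toReal_pos h0 (by exact ne_top_of_le_ne_top ENNReal.one_ne_top hx)
  have hxt1 : x.toReal ≤ 1 := by
    rw [← ENNReal.toReal_one]
    exact ENNReal.toReal_mono ENNReal.one_ne_top hx
  have hx' : x = ENNReal.ofReal x.toReal := (ENNReal.ofReal_toReal (by exact ne_top_of_le_ne_top ENNReal.one_ne_top hx)).symm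
  calc x * (‖Real.log x.toReal‖₊ : ℝ≥0∞)
      = ENNReal.ofReal x.toReal * ENNReal.ofReal ‖Real.log x.toReal‖ := by
        rw [← hx', ofReal_norm, enorm_eq_nnnorm]
    _ ≤ 1 := ?_
  rw [← ENNReal.ofReal_mul hxt.le]
  refine ENNReal.ofReal_le_one.mpr ?_
  have hlog : Real.log (x.toReal)⁻¹ ≤ (x.toReal)⁻¹ - 1 :=
    Real.log_le_sub_one_of_pos (by positivity)
  rw [Real.log_inv] at hlog
  have habs : ‖Real.log x.toReal‖ = -Real.log x.toReal := by
    rw [Real.norm_eq_abs, abs_of_nonpos (Real.log_nonpos hxt.le hxt1)]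
  rw [habs]
  have h1 : x.toReal * (x.toReal)⁻¹ = 1 := mul_inv_cancel₀ hxt.ne'
  nlinarith [hxt]

lemma aux_integrable {Z : Type*} [MeasurableSpace Z] (P ν : Measure Z) [IsFiniteMeasure ν]
    (hle : P ≤ ν) :
    Integrable (fun z => Real.log ((P.rnDeriv ν z).toReal)) P := by
  have hac : P ≪ ν := hle.absolutelyContinuous
  have hmeas : Measurable (fun z => Real.log ((P.rnDeriv ν z).toReal)) :=
    Real.measurable_log.comp (Measure.measurable_rnDeriv P ν).ennreal_toReal
  have : IsFiniteMeasure P := ⟨lt_of_le_of_lt (hle _) (measure_lt_top ν _)⟩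
  refine ⟨hmeas.aestronglyMeasurable, ?_⟩
  have hP' : ν.withDensity (P.rnDeriv ν) = P := Measure.withDensity_rnDeriv_eq _ _ hac
  set r := P.rnDeriv ν with hr
  show (∫⁻ z, (‖Real.log ((r z).toReal)‖₊ : ℝ≥0∞) ∂P) < ∞
  calc ∫⁻ z, (‖Real.log ((r z).toReal)‖₊ : ℝ≥0∞) ∂P
      = ∫⁻ z, r z * (‖Real.log ((r z).toReal)‖₊ : ℝ≥0∞) ∂ν := by
        rw [← hP', lintegral_withDensity_eq_lintegral_mul ν (Measure.measurable_rnDeriv P ν)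
          (show Measurable fun z => (‖Real.log ((r z).toReal)‖₊ : ℝ≥0∞) from hmeas.enorm)]
        rfl
    _ ≤ ∫⁻ _, 1 ∂ν := by
        refine lintegral_mono_ae ?_
        filter_upwards [Measure.rnDeriv_le_one_of_le hle] with z hz
        exact aux_bound hz
    _ < ∞ := by simp [measure_lt_top]

lemma aux_int {Z : Type*} [MeasurableSpace Z] (μ : Measure Z) [SigmaFinite μ]
    (p q : Z → ℝ) (hpm : Measurable p) (hqm : Measurable q)
    (hp0 : ∀ z, 0 ≤ p z) (hq0 : ∀ z, 0 ≤ q z)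
    (P Q : Measure Z)
    (hP : P = μ.withDensity fun z => ENNReal.ofReal (p z))
    (hQ : Q = μ.withDensity fun z => ENNReal.ofReal (q z))
    [IsFiniteMeasure P] [IsFiniteMeasure Q] :
    ∫ z, Real.log (2 * (P.rnDeriv (P + Q) z).toReal) ∂P
      = ∫ z, p z * Real.log (2 * p z / (p z + q z)) ∂μ := by
  have hfm : Measurable fun z => ENNReal.ofReal (p z) := hpm.ennreal_ofReal
  have hgm : Measurable fun z => ENNReal.ofReal (q z) := hqm.ennreal_ofReal
  have hPac : P ≪ P + Q := (Measure.le_add_right le_rfl).absolutelyContinuous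
  have hPQ : P + Q = μ.withDensity fun z => ENNReal.ofReal (p z) + ENNReal.ofReal (q z) := by
    rw [hP, hQ, ← withDensity_add_left hfm]
    rfl
  have key : ∀ᵐ z ∂μ,
      P.rnDeriv (P + Q) z * (ENNReal.ofReal (p z) + ENNReal.ofReal (q z))
        = ENNReal.ofReal (p z) := by
    have h1 := Measure.rnDeriv_mul_rnDeriv (κ := μ) hPac
    have h2 : (P + Q).rnDeriv μ =ᵐ[μ] fun z => ENNReal.ofReal (p z) + ENNReal.ofReal (q z) :=
      hPQ ▸ Measure.rnDeriv_withDensity μ (hfm.add hgm)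
    have h3 : P.rnDeriv μ =ᵐ[μ] fun z => ENNReal.ofReal (p z) := 
      hP ▸ Measure.rnDeriv_withDensity μ hfm
    filter_upwards [h1, h2, h3] with z h1 h2 h3
    calc P.rnDeriv (P + Q) z * (ENNReal.ofReal (p z) + ENNReal.ofReal (q z))
        = P.rnDeriv (P + Q) z * (P + Q).rnDeriv μ z := by rw [h2]
      _ = P.rnDeriv μ z := by simpa using h1
      _ = ENNReal.ofReal (p z) := h3
  have key2 : ∀ᵐ z ∂μ,
      p z * Real.log (2 * (P.rnDeriv (P + Q) z).toReal)
        = p z * Real.log (2 * p z / (p z + q z)) := by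
    filter_upwards [key] with z hz
    rcases eq_or_ne (p z) 0 with h0 | h0
    · simp [h0]
    have hp : 0 < p z := (hp0 z).lt_of_ne (Ne.symm h0)
    have hpq : 0 < p z + q z := by linarith [hq0 z]
    rw [← ENNReal.ofReal_add (hp0 z) (hq0 z)] at hz
    have hrn : P.rnDeriv (P + Q) z = ENNReal.ofReal (p z) / ENNReal.ofReal (p z + q z) := by
      rw [ENNReal.eq_div_iff (by simp [hpq]) (by simp), mul_comm]
      exact hz
    rw [hrn, ENNReal.toReal_div, ENNReal.toReal_ofReal (hp0 z), ENNReal.toReal_ofReal hpq.le,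
      mul_div_assoc]
  have hsw : ∀ F : Z → ℝ, ∫ z, F z ∂P = ∫ z, ((p z).toNNReal : ℝ) • F z ∂μ := by
    intro F
    rw [hP]
    exact integral_withDensity_eq_integral_smul
      (f := fun z => (p z).toNNReal)
      (measurable_real_toNNReal.comp hpm : Measurable fun z => (p z).toNNReal) F
  rw [hsw]
  refine integral_congr_ae ?_
  filter_upwards [key2] with z hz
  simp only [smul_eq_mul, Real.coe_toNNReal _ (hp0 z)]
  exact hz

theorem stmt19 {Z : Type*} [MeasurableSpace Z] (μ : Measure Z) [SigmaFinite μ]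
    (p q : Z → ℝ) (hpm : Measurable p) (hqm : Measurable q)
    (hp0 : ∀ z, 0 ≤ p z) (hq0 : ∀ z, 0 ≤ q z)
    (P Q : Measure Z)
    (hP : P = μ.withDensity fun z => ENNReal.ofReal (p z))
    (hQ : Q = μ.withDensity fun z => ENNReal.ofReal (q z))
    [IsProbabilityMeasure P] [IsProbabilityMeasure Q] :
    (∫ z, Real.log ((P.rnDeriv ((2⁻¹ : ℝ≥0∞) • (P + Q)) z).toReal) ∂P +
      ∫ z, Real.log ((Q.rnDeriv ((2⁻¹ : ℝ≥0∞) • (P + Q)) z).toReal) ∂Q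
        = ∫ z, p z * Real.log (2 * p z / (p z + q z)) ∂μ +
          ∫ z, q z * Real.log (2 * q z / (p z + q z)) ∂μ) ∧
    (2 * jsd P Q
        = (∫ z, Real.log ((P.rnDeriv (P + Q) z).toReal) ∂P +
           ∫ z, Real.log (1 - (P.rnDeriv (P + Q) z).toReal) ∂Q) + 2 * Real.log 2) := by
  have hPac : P ≪ P + Q := (Measure.le_add_right le_rfl).absolutelyContinuous
  have hQac : Q ≪ P + Q := (Measure.le_add_left le_rfl).absolutelyContinuous
  -- smul rewriting
  have hsmP : ∀ᵐ z ∂P, Real.log ((P.rnDeriv ((2⁻¹ : ℝ≥0∞) • (P + Q)) z).toReal)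
      = Real.log (2 * (P.rnDeriv (P + Q) z).toReal) := by
    have h := Measure.rnDeriv_smul_right_of_ne_top P (P + Q) (r := (2⁻¹ : ℝ≥0∞))
      (by simp) (by simp)
    filter_upwards [hPac.ae_le h] with z hz
    rw [hz]
    simp [ENNReal.toReal_mul]
  have hsmQ : ∀ᵐ z ∂Q, Real.log ((Q.rnDeriv ((2⁻¹ : ℝ≥0∞) • (P + Q)) z).toReal)
      = Real.log (2 * (Q.rnDeriv (P + Q) z).toReal) := by
    have h := Measure.rnDeriv_smul_right_of_ne_top Q (P + Q) (r := (2⁻¹ : ℝ≥0∞))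
      (by simp) (by simp)
    filter_upwards [hQac.ae_le h] with z hz
    rw [hz]
    simp [ENNReal.toReal_mul]
  have hA := aux_int μ p q hpm hqm hp0 hq0 P Q hP hQ
  have hB := aux_int μ q p hqm hpm hq0 hp0 Q P hQ hP
  rw [add_comm Q P] at hB
  have hB' : ∫ z, Real.log (2 * (Q.rnDeriv (P + Q) z).toReal) ∂Q
      = ∫ z, q z * Real.log (2 * q z / (p z + q z)) ∂μ := by
    rw [hB]
    refine integral_congr_ae (Filter.Eventually.of_forall fun z => ?_)
    show q z * Real.log (2 * q z / (q z + p z)) = q z * Real.log (2 * q z / (p z + q z))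
    rw [add_comm (q z) (p z)]
  constructor
  · rw [integral_congr_ae hsmP, integral_congr_ae hsmQ, hA, hB']
  · -- part 2
    have hIntP : Integrable (fun z => Real.log ((P.rnDeriv (P + Q) z).toReal)) P :=
      aux_integrable P (P + Q) (Measure.le_add_right le_rfl)
    have hIntQ : Integrable (fun z => Real.log ((Q.rnDeriv (P + Q) z).toReal)) Q :=
      aux_integrable Q (P + Q) (Measure.le_add_left le_rfl)
    have hApos : ∀ᵐ z ∂P, Real.log (2 * (P.rnDeriv (P + Q) z).toReal)
        = Real.log 2 + Real.log ((P.rnDeriv (P + Q) z).toReal) := by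
      filter_upwards [Measure.rnDeriv_pos hPac,
        hPac.ae_le (Measure.rnDeriv_lt_top P (P + Q))] with z h1 h2
      rw [Real.log_mul two_ne_zero (ENNReal.toReal_pos h1.ne' h2.ne).ne']
    have hBpos : ∀ᵐ z ∂Q, Real.log (2 * (Q.rnDeriv (P + Q) z).toReal)
        = Real.log 2 + Real.log ((Q.rnDeriv (P + Q) z).toReal) := by
      filter_upwards [Measure.rnDeriv_pos hQac,
        hQac.ae_le (Measure.rnDeriv_lt_top Q (P + Q))] with z h1 h2
      rw [Real.log_mul two_ne_zero (ENNReal.toReal_pos h1.ne' h2.ne).ne']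
    have hAeq : ∫ z, Real.log (2 * (P.rnDeriv (P + Q) z).toReal) ∂P
        = Real.log 2 + ∫ z, Real.log ((P.rnDeriv (P + Q) z).toReal) ∂P := by
      rw [integral_congr_ae hApos, integral_add (integrable_const _) hIntP]
      simp
    have hQeq : ∀ᵐ z ∂Q, (Q.rnDeriv (P + Q) z).toReal = 1 - (P.rnDeriv (P + Q) z).toReal := by
      have hsum : ∀ᵐ z ∂(P + Q),
          P.rnDeriv (P + Q) z + Q.rnDeriv (P + Q) z = 1 := by
        filter_upwards [Measure.rnDeriv_add' P Q (P + Q), Measure.rnDeriv_self (P + Q)]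
          with z h1 h2
        rw [← h2, h1, Pi.add_apply]
      refine (hQac.ae_le ?_)
      filter_upwards [hsum, Measure.rnDeriv_lt_top P (P + Q),
        Measure.rnDeriv_lt_top Q (P + Q)] with z h1 h2 h3
      have := congrArg ENNReal.toReal h1
      rw [ENNReal.toReal_add h2.ne h3.ne, ENNReal.toReal_one] at this
      linarith
    have hBeq : ∫ z, Real.log (2 * (Q.rnDeriv (P + Q) z).toReal) ∂Q
        = Real.log 2 + ∫ z, Real.log (1 - (P.rnDeriv (P + Q) z).toReal) ∂Q := by
      rw [integral_congr_ae hBpos, integral_add (integrable_const _) hIntQ]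
      have : ∫ z, Real.log ((Q.rnDeriv (P + Q) z).toReal) ∂Q
          = ∫ z, Real.log (1 - (P.rnDeriv (P + Q) z).toReal) ∂Q := by
        refine integral_congr_ae ?_
        filter_upwards [hQeq] with z hz
        rw [hz]
      rw [this]
      simp
    unfold jsd
    rw [hAeq, hBeq]
    ring
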